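/- Let 𝔣2 be the free Lie algebra on A, B over a field k of characteristic 0, and 𝔭 = [𝔣2, 𝔣2] its derived subalgebra. Then the quotient 𝔭/[𝔭,𝔭] is an abelian Lie algebra spanned by the classes of the elements p_{kℓ} = ad(A)^{k−1} ad(B)^{ℓ−1}([A,B]) for k, ℓ ≥ 1. -/

import Mathlib

theorem stmt12 (k : Type*) [Field k] [CharZero k] :
    let L := FreeLieAlgebra k (Fin 2)
    let A : L := FreeLieAlgebra.of k 0
    let B : L := FreeLieAlgebra.of k 1
    let p : LieIdeal k L := ⁅(⊤ : LieIdeal k L), (⊤ : LieIdeal k L)⁆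
    LieSubmodule.toSubmodule p =
      Submodule.span k {v : L | ∃ a b : ℕ, 1 ≤ a ∧ 1 ≤ b ∧
        v = ((LieAlgebra.ad k L A) ^ (a - 1)) (((LieAlgebra.ad k L B) ^ (b - 1)) ⁅A, B⁆)}
      ⊔ LieSubmodule.toSubmodule ⁅p, p⁆ := by
  intro L A B p
  set S : Submodule k L := Submodule.span k {v : L | ∃ a b : ℕ, 1 ≤ a ∧ 1 ≤ b ∧
      v = ((LieAlgebra.ad k L A) ^ (a - 1)) (((LieAlgebra.ad k L B) ^ (b - 1)) ⁅A, B⁆)}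
    with hS
  set Q : Submodule k L := LieSubmodule.toSubmodule ⁅p, p⁆ with hQ
  -- basic facts
  have hAB : (⁅A, B⁆ : L) ∈ p :=
    LieSubmodule.lie_mem_lie (LieSubmodule.mem_top A) (LieSubmodule.mem_top B)
  have hpow : ∀ (x : L) (n : ℕ) (v : L), v ∈ p →
      ((LieAlgebra.ad k L x) ^ n) v ∈ p := by
    intro x n
    induction n with
    | zero => intro v hv; simpa using hv
    | succ n ih =>
      intro v hv
      rw [pow_succ', Module.End.mul_apply, LieAlgebra.ad_apply]
      exact p.lie_mem (ih v hv)
  have hS_le_p : S ≤ LieSubmodule.toSubmodule p := by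
    rw [hS, Submodule.span_le]
    rintro v ⟨a, b, _, _, rfl⟩
    exact hpow A _ _ (hpow B _ _ hAB)
  have hQ_le_p : Q ≤ LieSubmodule.toSubmodule p :=
    (LieSubmodule.toSubmodule_le_toSubmodule _ _).2 (LieSubmodule.lie_le_left p p)
  set T : Submodule k L := S ⊔ Q with hT
  have hQ_ad : ∀ (x : L) (q : L), q ∈ Q → ⁅x, q⁆ ∈ Q := by
    intro x q hq
    exact (⁅p, p⁆ : LieIdeal k L).lie_mem hq
  have hQ_br : ∀ u v : L, u ∈ p → v ∈ p → ⁅u, v⁆ ∈ Q := by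
    intro u v hu hv
    exact LieSubmodule.lie_mem_lie hu hv
  -- ad A maps S-generators to S
  have hAdA_S : ∀ v ∈ S, ⁅A, v⁆ ∈ T := by
    intro v hv
    refine Submodule.span_induction ?_ ?_ ?_ ?_ hv
    · rintro v ⟨a, b, ha, hb, rfl⟩
      refine Submodule.mem_sup_left (Submodule.subset_span ⟨a + 1, b, by omega, hb, ?_⟩)
      have : a + 1 - 1 = (a - 1) + 1 := by omega
      rw [this, pow_succ', Module.End.mul_apply, LieAlgebra.ad_apply]
    · simp
    · intro u w _ _ hu hw; rw [lie_add]; exact T.add_mem hu hw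
    · intro c u _ hu; rw [lie_smul]; exact T.smul_mem c hu
  -- commuting ad B past powers of ad A, modulo Q
  have hcomm : ∀ (n : ℕ) (v : L), v ∈ p →
      ∃ q ∈ Q, ⁅B, ((LieAlgebra.ad k L A) ^ n) v⁆
        = ((LieAlgebra.ad k L A) ^ n) ⁅B, v⁆ + q := by
    intro n
    induction n with
    | zero => intro v hv; exact ⟨0, Q.zero_mem, by simp⟩
    | succ n ih =>
      intro v hv
      obtain ⟨q₀, hq₀, hq⟩ := ih v hv
      refine ⟨⁅(⁅B, A⁆ : L), ((LieAlgebra.ad k L A) ^ n) v⁆ + ⁅A, q₀⁆,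
        Q.add_mem (hQ_br _ _ (LieSubmodule.lie_mem_lie (LieSubmodule.mem_top B)
          (LieSubmodule.mem_top A)) (hpow A n v hv)) (hQ_ad A q₀ hq₀), ?_⟩
      rw [pow_succ', Module.End.mul_apply, Module.End.mul_apply, LieAlgebra.ad_apply,
        LieAlgebra.ad_apply]
      rw [leibniz_lie, hq, lie_add]
      abel
  have hAdB_S : ∀ v ∈ S, ⁅B, v⁆ ∈ T := by
    intro v hv
    refine Submodule.span_induction ?_ ?_ ?_ ?_ hv
    · rintro v ⟨a, b, ha, hb, rfl⟩
      obtain ⟨q, hq, hq'⟩ := hcomm (a - 1) (((LieAlgebra.ad k L B) ^ (b - 1)) ⁅A, B⁆)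
        (hpow B _ _ hAB)
      rw [hq']
      refine T.add_mem (Submodule.mem_sup_left
        (Submodule.subset_span ⟨a, b + 1, ha, by omega, ?_⟩)) (Submodule.mem_sup_right hq)
      have : b + 1 - 1 = (b - 1) + 1 := by omega
      rw [this, pow_succ', Module.End.mul_apply, LieAlgebra.ad_apply]
    · simp
    · intro u w _ _ hu hw; rw [lie_add]; exact T.add_mem hu hw
    · intro c u _ hu; rw [lie_smul]; exact T.smul_mem c hu
  -- T is stable under ad A and ad B, hence under ad of span {A, B}
  have hT_adA : ∀ v ∈ T, ⁅A, v⁆ ∈ T := by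
    intro v hv
    obtain ⟨s, hs, q, hq, rfl⟩ := Submodule.mem_sup.1 hv
    rw [lie_add]
    exact T.add_mem (hAdA_S s hs) (Submodule.mem_sup_right (hQ_ad A q hq))
  have hT_adB : ∀ v ∈ T, ⁅B, v⁆ ∈ T := by
    intro v hv
    obtain ⟨s, hs, q, hq, rfl⟩ := Submodule.mem_sup.1 hv
    rw [lie_add]
    exact T.add_mem (hAdB_S s hs) (Submodule.mem_sup_right (hQ_ad B q hq))
  have hspan_ad : ∀ x ∈ Submodule.span k ({A, B} : Set L), ∀ v ∈ T, ⁅x, v⁆ ∈ T := by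
    intro x hx v hv
    obtain ⟨c, d, rfl⟩ := Submodule.mem_span_pair.1 hx
    rw [add_lie, smul_lie, smul_lie]
    exact T.add_mem (T.smul_mem c (hT_adA v hv)) (T.smul_mem d (hT_adB v hv))
  have hT_le_p : T ≤ LieSubmodule.toSubmodule p := sup_le hS_le_p hQ_le_p
  -- brackets of elements of span {A,B} ⊔ T land in T
  have hABT : (⁅A, B⁆ : L) ∈ T :=
    Submodule.mem_sup_left (Submodule.subset_span ⟨1, 1, le_refl 1, le_refl 1, by simp⟩)
  have hbr : ∀ x ∈ Submodule.span k ({A, B} : Set L) ⊔ T,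
      ∀ y ∈ Submodule.span k ({A, B} : Set L) ⊔ T, ⁅x, y⁆ ∈ T := by
    intro x hx y hy
    obtain ⟨s, hs, u, hu, rfl⟩ := Submodule.mem_sup.1 hx
    obtain ⟨t, ht, v, hv, rfl⟩ := Submodule.mem_sup.1 hy
    rw [add_lie, lie_add, lie_add]
    have hst : (⁅s, t⁆ : L) ∈ T := by
      obtain ⟨c, d, rfl⟩ := Submodule.mem_span_pair.1 hs
      obtain ⟨c', d', rfl⟩ := Submodule.mem_span_pair.1 ht
      rw [add_lie, smul_lie, smul_lie, lie_add, lie_add, lie_smul, lie_smul, lie_smul,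
        lie_smul, lie_self, lie_self, smul_zero, smul_zero, add_zero, zero_add]
      have hBA : (⁅B, A⁆ : L) = -⁅A, B⁆ := by rw [← lie_skew]
      rw [hBA]
      exact T.add_mem (T.smul_mem c (T.smul_mem d' hABT))
        (T.smul_mem d (T.smul_mem c' (T.neg_mem hABT)))
    have hsv : (⁅s, v⁆ : L) ∈ T := hspan_ad s hs v hv
    have hut : (⁅u, t⁆ : L) ∈ T := by
      rw [← lie_skew]
      exact T.neg_mem (hspan_ad t ht u hu)
    have huv : (⁅u, v⁆ : L) ∈ T :=
      Submodule.mem_sup_right (hQ_br u v (hT_le_p hu) (hT_le_p hv))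
    exact T.add_mem (T.add_mem hst hsv) (T.add_mem hut huv)
  -- span {A,B} ⊔ T is a Lie subalgebra, hence everything
  set R : LieSubalgebra k L :=
    { Submodule.span k ({A, B} : Set L) ⊔ T with
      lie_mem' := fun hx hy => Submodule.mem_sup_right (hbr _ hx _ hy) } with hR
  have hof : ∀ i : Fin 2, FreeLieAlgebra.of k i ∈ R := by
    intro i
    fin_cases i
    · exact Submodule.mem_sup_left
        (Submodule.subset_span (Set.mem_insert A {B}))
    · exact Submodule.mem_sup_left
        (Submodule.subset_span (Set.mem_insert_of_mem A rfl))
  have hRtop : ∀ x : L, x ∈ R := by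
    let f : L →ₗ⁅k⁆ R := FreeLieAlgebra.lift k (fun i => ⟨FreeLieAlgebra.of k i, hof i⟩)
    have hg : R.incl.comp f = LieHom.id := by
      apply FreeLieAlgebra.hom_ext
      intro x
      show R.incl (f (FreeLieAlgebra.of k x)) = FreeLieAlgebra.of k x
      rw [show f (FreeLieAlgebra.of k x) = ⟨FreeLieAlgebra.of k x, hof x⟩ from
        FreeLieAlgebra.lift_of_apply (fun i => (⟨FreeLieAlgebra.of k i, hof i⟩ : R)) x]
      rfl
    intro x
    have : R.incl (f x) = x := by rw [← LieHom.comp_apply, hg]; rfl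
    rw [← this]
    exact (f x).2
  -- conclude
  apply le_antisymm
  · rw [LieSubmodule.lieIdeal_oper_eq_linear_span', Submodule.span_le]
    rintro v ⟨x, -, y, -, rfl⟩
    exact hbr x (hRtop x) y (hRtop y)
  · exact sup_le hS_le_p hQ_le_p
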